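/- Sufficiency direction of the Strong Completeness theorem: let f : ℝⁿ → ℝ be continuously differentiable and let γ : [0,1] → ℝⁿ be a continuously differentiable path with γ(0) = x̄ and γ(1) = x. Suppose there exists a continuous function λ : [0,1] → ℝ such that γ̇(t) = λ(t) ∇f(γ(t)) for every t ∈ [0,1], and λ does not change sign (λ(t) ≥ 0 for all t, or λ(t) ≤ 0 for all t). Then ∑_{i=1}^n |A_i^γ(x)| = |f(x) − f(x̄)|. -/

import Mathlib

open Set MeasureTheory

/-- The `i`-th partial derivative of `f : ℝⁿ → ℝ` at `z`. -/
noncomputable def partialD (n : ℕ) (f : (Fin n → ℝ) → ℝ) (z : Fin n → ℝ) (i : Fin n) : ℝ :=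
  fderiv ℝ f z (Pi.single i 1)

/-- The gradient of `f : ℝⁿ → ℝ` at `z`, as the vector of partial derivatives. -/
noncomputable def gradVec (n : ℕ) (f : (Fin n → ℝ) → ℝ) (z : Fin n → ℝ) : Fin n → ℝ :=
  fun i => partialD n f z i

/-- The Euclidean norm of the gradient of `f` at `z`. -/
noncomputable def gradNorm (n : ℕ) (f : (Fin n → ℝ) → ℝ) (z : Fin n → ℝ) : ℝ :=
  Real.sqrt (∑ i, gradVec n f z i ^ 2)

/-- The path attribution of coordinate `i`:
`A_i^γ = ∫₀¹ (∂f/∂x_i)(γ(t)) · γ̇_i(t) dt`. -/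
noncomputable def pathAttr (n : ℕ) (f : (Fin n → ℝ) → ℝ) (γ : ℝ → Fin n → ℝ) (i : Fin n) : ℝ :=
  ∫ t in (0:ℝ)..1, partialD n f (γ t) i * deriv γ t i

lemma clm_eq_sum {n : ℕ} (L : (Fin n → ℝ) →L[ℝ] ℝ) (v : Fin n → ℝ) :
    L v = ∑ i, L (Pi.single i 1) * v i := by
  have hv : v = ∑ i, (v i) • (Pi.single i 1 : Fin n → ℝ) := by
    ext j
    simp [Finset.sum_apply, Pi.single_apply]
  conv_lhs => rw [hv]
  rw [map_sum]
  refine Finset.sum_congr rfl fun i _ => ?_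
  rw [L.map_smul, smul_eq_mul, mul_comm]

/-- Sufficiency direction of the Strong Completeness theorem: a gradient-parallel path
with constant-sign speed factor satisfies Strong Completeness. -/
theorem strong_completeness_sufficiency
    (n : ℕ) (f : (Fin n → ℝ) → ℝ) (γ : ℝ → Fin n → ℝ) (xbar x : Fin n → ℝ)
    (hf : ContDiff ℝ 1 f) (hγ : ContDiff ℝ 1 γ)
    (h0 : γ 0 = xbar) (h1 : γ 1 = x)
    (lam : ℝ → ℝ) (hlam : ContinuousOn lam (Icc 0 1))
    (hpar : ∀ t ∈ Icc (0:ℝ) 1, deriv γ t = lam t • gradVec n f (γ t))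
    (hsign : (∀ t ∈ Icc (0:ℝ) 1, 0 ≤ lam t) ∨ (∀ t ∈ Icc (0:ℝ) 1, lam t ≤ 0)) :
    ∑ i, |pathAttr n f γ i| = |f x - f xbar| := by
  have hγc : Continuous γ := hγ.continuous
  have hγd : Continuous (deriv γ) := hγ.continuous_deriv le_rfl
  have hfd : Continuous (fun z => fderiv ℝ f z) := hf.continuous_fderiv one_ne_zero
  have hcont : ∀ i : Fin n, Continuous (fun t => partialD n f (γ t) i * deriv γ t i) :=
    fun i => ((hfd.comp hγc).clm_apply continuous_const).mul ((continuous_apply i).comp hγd)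
  have hint : ∀ i : Fin n,
      IntervalIntegrable (fun t => partialD n f (γ t) i * deriv γ t i) volume 0 1 :=
    fun i => (hcont i).intervalIntegrable 0 1
  have hderiv : ∀ t : ℝ,
      HasDerivAt (fun s => f (γ s)) (∑ i, partialD n f (γ t) i * deriv γ t i) t := by
    intro t
    have h1' : HasDerivAt γ (deriv γ t) t := (hγ.differentiable one_ne_zero t).hasDerivAt
    have h2 := (hf.differentiable one_ne_zero (γ t)).hasFDerivAt.comp_hasDerivAt t h1'
    rw [clm_eq_sum] at h2
    exact h2
  have hsum : ∑ i, pathAttr n f γ i = f x - f xbar := by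
    unfold pathAttr
    rw [← intervalIntegral.integral_finset_sum (fun i _ => hint i),
      intervalIntegral.integral_eq_sub_of_hasDerivAt (fun t _ => hderiv t)
        ((continuous_finset_sum _ fun i _ => hcont i).intervalIntegrable 0 1), h0, h1]
  have key : ∀ (i : Fin n), ∀ t ∈ Icc (0:ℝ) 1,
      partialD n f (γ t) i * deriv γ t i = lam t * (gradVec n f (γ t) i) ^ 2 := by
    intro i t ht
    rw [congrFun (hpar t ht) i]
    simp only [Pi.smul_apply, smul_eq_mul, gradVec]
    ring
  rcases hsign with hpos | hneg
  · have hnn : ∀ i : Fin n, 0 ≤ pathAttr n f γ i := by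
      intro i
      refine intervalIntegral.integral_nonneg (by norm_num) fun u hu => ?_
      rw [key i u hu]
      exact mul_nonneg (hpos u hu) (sq_nonneg _)
    have : ∑ i, |pathAttr n f γ i| = ∑ i, pathAttr n f γ i :=
      Finset.sum_congr rfl fun i _ => abs_of_nonneg (hnn i)
    rw [this, hsum, abs_of_nonneg]
    rw [← hsum]
    exact Finset.sum_nonneg fun i _ => hnn i
  · have hnp : ∀ i : Fin n, pathAttr n f γ i ≤ 0 := by
      intro i
      have h' : 0 ≤ ∫ t in (0:ℝ)..1, -(partialD n f (γ t) i * deriv γ t i) := by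
        refine intervalIntegral.integral_nonneg (by norm_num) fun u hu => ?_
        rw [key i u hu]
        simpa using mul_nonpos_of_nonpos_of_nonneg (hneg u hu) (sq_nonneg (gradVec n f (γ u) i))
      rw [intervalIntegral.integral_neg] at h'
      unfold pathAttr
      linarith
    have : ∑ i, |pathAttr n f γ i| = -∑ i, pathAttr n f γ i := by
      rw [← Finset.sum_neg_distrib]
      exact Finset.sum_congr rfl fun i _ => abs_of_nonpos (hnp i)
    rw [this, hsum, abs_of_nonpos]
    rw [← hsum]
    exact Finset.sum_nonpos fun i _ => hnp i
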